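/- Let j ∈ {1, …, K}, let x ∈ V_j, and let c be an integer with 0 ≤ c ≤ M. Then |{ξ ∈ S : ξ(x) = c}| = Λ((N₁, …, N_K) − e_j, (R₁, …, R_K), M − c), where e_j denotes the j-th standard unit vector of ℤ^K. Consequently, under the uniform distribution on S (the stationary distribution of the money-exchange chain), the probability that vertex x possesses exactly c coins equals Λ((N₁, …, N_K) − e_j, (R₁, …, R_K), M − c) / Λ((N₁, …, N_K), (R₁, …, R_K), M). -/

import Mathlib

open scoped Classical
open Finset

section MoneyExchange

variable {V : Type*} [Fintype V] [DecidableEq V] {K : ℕ}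

/-- Move one coin from `x` to `y`. -/
def tau (x y : V) (ξ : V → ℤ) : V → ℤ :=
  fun z => ξ z - (if z = x then 1 else 0) + (if z = y then 1 else 0)

/-- Total (nonpositive) debt of the customers of bank `i`:
`∑_{z ∈ Vᵢ} ξ(z) · 1{ξ(z) < 0}`. -/
def bankDebt (bank : V → Fin K) (ξ : V → ℤ) (i : Fin K) : ℤ :=
  ∑ z ∈ univ.filter fun z => bank z = i, min (ξ z) 0

/-- Admissible configurations: total money `M` and each bank lends at most `Rᵢ`. -/
def admissible (bank : V → Fin K) (R : Fin K → ℕ) (M : ℕ) (ξ : V → ℤ) : Prop :=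
  (∑ z, ξ z) = (M : ℤ) ∧ ∀ i, -(R i : ℤ) ≤ bankDebt bank ξ i

/-- The move from `x` is allowed in `ξ`: `x` has a coin or its bank is nonempty. -/
def allowed (bank : V → Fin K) (R : Fin K → ℕ) (ξ : V → ℤ) (x : V) : Prop :=
  0 < ξ x ∨ -(R (bank x) : ℤ) < bankDebt bank ξ (bank x)

/-- One-step transition probability of the money-exchange chain: each ordered
adjacent pair `(x, y)` is chosen with probability `1/(2|E|)`, and a coin moves
from `x` to `y` whenever the move from `x` is allowed; otherwise nothing happens. -/
noncomputable def step (G : SimpleGraph V) (bank : V → Fin K) (R : Fin K → ℕ)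
    (ξ ξ' : V → ℤ) : ℝ :=
  (((univ.filter fun pq : V × V =>
        G.Adj pq.1 pq.2 ∧ allowed bank R ξ pq.1 ∧ tau pq.1 pq.2 ξ = ξ').card : ℝ)
      + if ξ' = ξ then
          ((univ.filter fun pq : V × V =>
            G.Adj pq.1 pq.2 ∧ ¬ allowed bank R ξ pq.1).card : ℝ)
        else 0)
    / ((univ.filter fun pq : V × V => G.Adj pq.1 pq.2).card : ℝ)

/-- `t`-step transition probability of the money-exchange chain. -/
noncomputable def stepT (G : SimpleGraph V) (bank : V → Fin K) (R : Fin K → ℕ) :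
    ℕ → (V → ℤ) → (V → ℤ) → ℝ
  | 0, ξ, ξ' => if ξ = ξ' then 1 else 0
  | t + 1, ξ, ξ' =>
      ∑ η ∈ insert ξ ((univ.filter fun pq : V × V => G.Adj pq.1 pq.2).image
          fun pq => tau pq.1 pq.2 ξ),
        step G bank R ξ η * stepT G bank R t η ξ'

end MoneyExchange

/-- Binomial coefficient `C(a−1, b−1)` with the conventions: equal to `1` when
`a = b = 0`, to `0` when exactly one of `a`, `b` is `0`, and to `0` when
`b − 1 > a − 1`. -/
def ccat (a b : ℕ) : ℕ :=
  if a = 0 ∧ b = 0 then 1 else if a = 0 ∨ b = 0 then 0 else (a - 1).choose (b - 1)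

/-- Binomial coefficient `C(s, t)` for integers `s`, `t`, equal to `0` whenever
`t < 0` or `t > s`. -/
def chooseZ (s t : ℤ) : ℕ :=
  if 0 ≤ t ∧ t ≤ s then s.toNat.choose t.toNat else 0

/-- The counting function `Λ(n, r, m)`. -/
def Lambda {K : ℕ} (n r : Fin K → ℕ) (m : ℤ) : ℕ :=
  ∑ a ∈ Fintype.piFinset fun i : Fin K => Finset.range (r i + 1),
    ∑ b ∈ Fintype.piFinset fun i : Fin K => Finset.range (n i + 1),
      (∏ i, (n i).choose (b i) * ccat (a i) (b i)) *
        chooseZ (m + (∑ i, (a i : ℤ)) + (∑ i, (n i : ℤ)) - (∑ i, (b i : ℤ)) - 1)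
                ((∑ i, (n i : ℤ)) - (∑ i, (b i : ℤ)) - 1)


def sbar (k s : ℕ) : ℕ := if k = 0 then (if s = 0 then 1 else 0) else (s + k - 1).choose (k - 1)


lemma natCard_eq_filter_card {α : Type*} [DecidableEq α] (s : Finset α) (p : α → Prop)
    [DecidablePred p] (h : ∀ x, p x → x ∈ s) : Nat.card {x // p x} = (s.filter p).card := by
  have e : {x // p x} ≃ {x // x ∈ s.filter p} :=
    Equiv.subtypeEquivRight (by intro x; simp only [mem_filter]; tauto)
  rw [Nat.card_congr e, Nat.card_eq_fintype_card, Fintype.card_coe]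

lemma sum_subtype_pred {α M : Type*} [Fintype α] [AddCommMonoid M] (p : α → Prop)
    [DecidablePred p] [Fintype (Subtype p)] (F : α → M) : ∑ z : {x // p x}, F z.1 = ∑ z ∈ univ.filter p, F z :=
  (Finset.sum_subtype (p := p) (univ.filter p) (by simp) F).symm

/-- Stars and bars. -/
lemma card_sum_eq (X : Type*) [Fintype X] [DecidableEq X] (s : ℕ) :
    Nat.card {f : X → ℕ // ∑ z, f z = s} = sbar (Fintype.card X) s := by
  rcases isEmpty_or_nonempty X with hX | hX
  · have hc : Fintype.card X = 0 := Fintype.card_eq_zero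
    rcases eq_or_ne s 0 with rfl | hs
    · have e : {f : X → ℕ // ∑ z, f z = 0} ≃ (X → ℕ) :=
        Equiv.subtypeUnivEquiv (fun f => by simp)
      rw [Nat.card_congr e, sbar, hc]
      simp [Nat.card_eq_fintype_card]
    · have : IsEmpty {f : X → ℕ // ∑ z, f z = s} := by
        constructor; rintro ⟨f, hf⟩; simp at hf; exact hs hf.symm
      rw [Nat.card_of_isEmpty, sbar, hc]
      simp [hs]
  · have hk : Fintype.card X ≠ 0 := Fintype.card_ne_zero
    rw [Nat.card_congr (Sym.equivNatSumOfFintype X s).symm, Nat.card_eq_fintype_card,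
      Sym.card_sym_eq_choose, sbar, if_neg hk]
    have h1 : 1 ≤ Fintype.card X := Nat.one_le_iff_ne_zero.mpr hk
    rw [← Nat.choose_symm (by omega : s ≤ Fintype.card X + s - 1)]
    congr 1
    · omega
    · omega

/-- Compositions with positive parts. -/
lemma card_comp_eq (X : Type*) [Fintype X] [DecidableEq X] (a : ℕ) :
    Nat.card {f : X → ℕ // ∑ z, (f z + 1) = a} = ccat a (Fintype.card X) := by
  set b := Fintype.card X with hb
  have hsum : ∀ f : X → ℕ, ∑ z, (f z + 1) = (∑ z, f z) + b := by
    intro f; rw [Finset.sum_add_distrib, Finset.sum_const, card_univ, smul_eq_mul, mul_one]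
  rcases lt_or_ge a b with hab | hab
  · have : IsEmpty {f : X → ℕ // ∑ z, (f z + 1) = a} := by
      constructor; rintro ⟨f, hf⟩; rw [hsum] at hf; omega
    rw [Nat.card_of_isEmpty, ccat]
    have hbne : b ≠ 0 := by omega
    rcases eq_or_ne a 0 with rfl | ha
    · simp [hbne]
    · rw [if_neg (by tauto), if_neg (by tauto)]
      exact (Nat.choose_eq_zero_of_lt (by omega)).symm
  · have e : {f : X → ℕ // ∑ z, (f z + 1) = a} ≃ {f : X → ℕ // ∑ z, f z = a - b} :=
      Equiv.subtypeEquivRight (fun f => by rw [hsum]; omega)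
    rw [Nat.card_congr e, card_sum_eq, ← hb, sbar, ccat]
    rcases eq_or_ne b 0 with hb0 | hbne
    · rcases eq_or_ne a 0 with rfl | ha
      · simp [hb0]
      · simp [hb0, ha]
    · rw [if_neg hbne, if_neg (by omega : ¬(a = 0 ∧ b = 0)), if_neg (by omega : ¬(a = 0 ∨ b = 0))]
      congr 1
      omega

section
variable {W : Type*} [Fintype W] [DecidableEq W] {K : ℕ}

/-- Functions `W → ℕ` decompose as products over fibers of `bank`. -/
def bankPiEquiv (bank : W → Fin K) : (W → ℕ) ≃ (∀ i, {z // bank z = i} → ℕ) where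
  toFun f := fun i z => f z.1
  invFun g := fun w => g (bank w) ⟨w, rfl⟩
  left_inv f := rfl
  right_inv g := by
    funext i z
    rcases z with ⟨w, hw⟩
    subst hw
    rfl

lemma fiberwise_card (bank : W → Fin K) (p : ∀ i, ({z // bank z = i} → ℕ) → Prop) :
    Nat.card {f : W → ℕ // ∀ i, p i (fun z => f z.1)}
      = ∏ i, Nat.card {h : {z // bank z = i} → ℕ // p i h} := by
  have e1 : {f : W → ℕ // ∀ i, p i (fun z => f z.1)}
      ≃ {g : ∀ i, {z // bank z = i} → ℕ // ∀ i, p i (g i)} :=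
    (bankPiEquiv bank).subtypeEquiv (fun f => Iff.rfl)
  rw [Nat.card_congr (e1.trans (Equiv.subtypePiEquivPi)), Nat.card_pi]

lemma fibcard (T : Finset W) (bank : W → Fin K) (i : Fin K) :
    Fintype.card {z : {w // w ∈ T} // bank z.1 = i}
      = (T.filter fun z => bank z = i).card := by
  rw [Fintype.card_congr (Equiv.subtypeSubtypeEquivSubtypeInter (· ∈ T) (bank · = i)),
    Fintype.card_subtype]
  congr 1
  ext z
  simp [and_comm]

/-- Number of subsets with prescribed fiber cardinalities. -/
lemma card_subsets_eq (bank : W → Fin K) (b : Fin K → ℕ) :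
    ((univ : Finset W).powerset.filter
        (fun T => (fun i => (T.filter fun z => bank z = i).card) = b)).card
      = ∏ i, ((univ.filter fun z => bank z = i).card).choose (b i) := by
  rw [← natCard_eq_filter_card _ _ (fun T _ => mem_powerset.mpr (subset_univ T))]
  have e : {T : Finset W // (fun i => (T.filter fun z => bank z = i).card) = b}
      ≃ ∀ i, {S // S ∈ (univ.filter fun z => bank z = i).powersetCard (b i)} := by
    refine
      { toFun := fun T i => ⟨(T.1.filter fun z => bank z = i), ?_⟩
        invFun := fun S => ⟨univ.biUnion (fun i => (S i).1), ?_⟩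
        left_inv := ?_
        right_inv := ?_ }
    · rw [mem_powersetCard]
      exact ⟨fun z hz => by simp_all [mem_filter], congrFun T.2 i⟩
    · funext i
      have hsub : ∀ j, ∀ z ∈ (S j).1, bank z = j := by
        intro j z hz
        have := (mem_powersetCard.mp (S j).2).1 hz
        simp_all [mem_filter]
      have : ((univ.biUnion fun i => (S i).1).filter fun z => bank z = i) = (S i).1 := by
        ext z
        simp only [mem_filter, mem_biUnion, mem_univ, true_and]
        constructor
        · rintro ⟨⟨j, hj⟩, hb⟩
          have := hsub j z hj
          subst this
          subst hb
          exact hj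
        · intro hz
          exact ⟨⟨i, hz⟩, hsub i z hz⟩
      rw [this]
      exact (mem_powersetCard.mp (S i).2).2
    · rintro ⟨T, hT⟩
      refine Subtype.ext ?_
      exact biUnion_filter_eq_of_maps_to (fun z _ => mem_univ _)
    · intro S
      funext i
      refine Subtype.ext ?_
      -- same computation as above
      have hsub : ∀ j, ∀ z ∈ (S j).1, bank z = j := by
        intro j z hz
        have := (mem_powersetCard.mp (S j).2).1 hz
        simp_all [mem_filter]
      ext z
      simp only [mem_filter, mem_biUnion, mem_univ, true_and]
      constructor
      · rintro ⟨⟨j, hj⟩, hb⟩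
        have := hsub j z hj
        subst this
        subst hb
        exact hj
      · intro hz
        exact ⟨⟨i, hz⟩, hsub i z hz⟩
  rw [Nat.card_congr e, Nat.card_pi]
  refine Finset.prod_congr rfl (fun i _ => ?_)
  rw [Nat.card_eq_fintype_card, Fintype.card_coe, card_powersetCard]

end
section
variable {W : Type*} [Fintype W] [DecidableEq W] {K : ℕ}

/-- the set of vertices in debt -/
def negs (ξ : W → ℤ) : Finset W := univ.filter fun z => ξ z < 0

lemma debt_eq (bank : W → Fin K) (ξ : W → ℤ) (i : Fin K) :
    bankDebt bank ξ i = ∑ z ∈ (negs ξ).filter (fun z => bank z = i), ξ z := by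
  rw [bankDebt, negs, filter_filter]
  have h1 : ∀ z : W, min (ξ z) 0 = if ξ z < 0 then ξ z else 0 := by
    intro z; rcases lt_or_ge (ξ z) 0 with h | h
    · rw [if_pos h, min_eq_left h.le]
    · rw [if_neg (not_lt.mpr h), min_eq_right h]
  calc ∑ z ∈ univ.filter fun z => bank z = i, min (ξ z) 0
      = ∑ z ∈ univ.filter fun z => bank z = i, if ξ z < 0 then ξ z else 0 := by
        exact Finset.sum_congr rfl (fun z _ => h1 z)
    _ = ∑ z ∈ (univ.filter fun z => bank z = i).filter (fun z => ξ z < 0), ξ z :=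
        (Finset.sum_filter _ _).symm
    _ = ∑ z ∈ univ.filter (fun z => ξ z < 0 ∧ bank z = i), ξ z := by
        rw [filter_filter]
        congr 1
        ext z
        simp [and_comm]

/-- the property describing configurations with negative set `T` and debts `a` -/
def Qp (bank : W → Fin K) (T : Finset W) (a : Fin K → ℕ) (m : ℕ) (ξ : W → ℤ) : Prop :=
  (∑ z, ξ z) = (m : ℤ) ∧ negs ξ = T ∧
    ∀ i, ∑ z ∈ T.filter (fun z => bank z = i), (-ξ z) = (a i : ℤ)

lemma inner_card (bank : W → Fin K) (T : Finset W) (a : Fin K → ℕ) (m : ℕ) :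
    Nat.card {ξ : W → ℤ // Qp bank T a m ξ}
      = (∏ i, ccat (a i) ((T.filter fun z => bank z = i).card))
          * sbar (Fintype.card W - T.card) (m + ∑ i, a i) := by
  classical
  set A : ℤ := ∑ i, (a i : ℤ) with hA
  -- the two factor types
  set F := {f : {z // z ∈ T} → ℕ //
      ∀ i, ∑ z : {z // z ∈ T}, (if bank z.1 = i then f z + 1 else 0) = a i} with hF
  set G := {g : {z : W // z ∉ T} → ℕ // ∑ z, g z = m + ∑ i, a i} with hG
  have key : {ξ : W → ℤ // Qp bank T a m ξ} ≃ F × G := by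
    refine
      { toFun := fun ξ => (⟨fun z => (-ξ.1 z.1 - 1).toNat, ?_⟩, ⟨fun z => (ξ.1 z.1).toNat, ?_⟩)
        invFun := fun fg =>
          ⟨fun z => if h : z ∈ T then -((fg.1.1 ⟨z, h⟩ : ℤ) + 1) else (fg.2.1 ⟨z, h⟩ : ℤ), ?_⟩
        left_inv := ?_
        right_inv := ?_ }
    · -- f satisfies the fiber-sum conditions
      obtain ⟨ξ, hsum, hneg, hfib⟩ := ξ
      intro i
      have hlt : ∀ z, z ∈ T → ξ z < 0 := by
        intro z hz; rw [← hneg, negs, mem_filter] at hz; exact hz.2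
      have : ((∑ z : {z // z ∈ T}, (if bank z.1 = i then (-ξ z.1 - 1).toNat + 1 else 0) : ℕ) : ℤ)
          = (a i : ℤ) := by
        push_cast
        have : ∀ z : {z // z ∈ T},
            ((if bank z.1 = i then ((-ξ z.1 - 1).toNat : ℤ) + 1 else 0) : ℤ)
              = (if bank z.1 = i then -ξ z.1 else 0) := by
          intro z
          have := hlt z.1 z.2
          split_ifs
          · rw [Int.toNat_of_nonneg (by omega)]; ring
          · rfl
        rw [Finset.sum_congr rfl (fun z _ => this z), Finset.sum_coe_sort T
          (fun z => if bank z = i then -ξ z else 0), ← Finset.sum_filter]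
        exact hfib i
      exact_mod_cast this
    · -- g satisfies the total-sum condition
      obtain ⟨ξ, hsum, hneg, hfib⟩ := ξ
      have hge : ∀ z : W, z ∉ T → 0 ≤ ξ z := by
        intro z hz; rw [← hneg, negs, mem_filter] at hz; push_neg at hz
        exact hz (mem_univ z)
      have hTneg : ∑ z ∈ T, (-ξ z) = A := by
        rw [hA, ← Finset.sum_fiberwise_of_maps_to (fun z _ => mem_univ (bank z))
          (fun z => -ξ z)]
        exact Finset.sum_congr rfl (fun i _ => hfib i)
      have key2 : ((∑ z : {z : W // z ∉ T}, (ξ z.1).toNat : ℕ) : ℤ) = ((m : ℤ) + A) := by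
        push_cast
        calc ∑ z : {z : W // z ∉ T}, ((ξ z.1).toNat : ℤ)
            = ∑ z : {z : W // z ∉ T}, ξ z.1 :=
              Finset.sum_congr rfl (fun z _ => Int.toNat_of_nonneg (hge z.1 z.2))
          _ = ∑ z ∈ univ.filter (fun z => z ∉ T), ξ z := sum_subtype_pred _ _
          _ = ∑ z ∈ univ \ T, ξ z := by rw [Finset.filter_not, Finset.filter_univ_mem]
          _ = ∑ z : W, ξ z - ∑ z ∈ T, ξ z := Finset.sum_sdiff_eq_sub (subset_univ T)
          _ = (m : ℤ) + A := by
              have := Finset.sum_neg_distrib (s := T) (f := ξ)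
              omega
      show (∑ z : {z : W // z ∉ T}, (ξ z.1).toNat : ℕ) = m + ∑ i, a i
      have : ((m + ∑ i, a i : ℕ) : ℤ) = (m : ℤ) + A := by push_cast [hA]; ring
      omega
    · -- invFun lands in Qp
      obtain ⟨⟨f, hf⟩, ⟨g, hg⟩⟩ := fg
      simp only
      have hneg : negs (fun z => if h : z ∈ T then -((f ⟨z, h⟩ : ℤ) + 1) else (g ⟨z, h⟩ : ℤ)) = T := by
        ext z
        simp only [negs, mem_filter, mem_univ, true_and]
        by_cases h : z ∈ T
        · simp only [dif_pos h]
          constructor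
          · intro _; exact h
          · intro _; have : (0 : ℤ) ≤ f ⟨z, h⟩ := Int.natCast_nonneg _; omega
        · simp only [dif_neg h]
          constructor
          · intro hc; exact absurd (Int.natCast_nonneg (g ⟨z, h⟩)) (not_le.mpr hc)
          · intro hc; exact absurd hc h
      have hfib : ∀ i, ∑ z ∈ T.filter (fun z => bank z = i),
          (-(if h : z ∈ T then -((f ⟨z, h⟩ : ℤ) + 1) else (g ⟨z, h⟩ : ℤ))) = (a i : ℤ) := by
        intro i
        calc ∑ z ∈ T.filter (fun z => bank z = i),
              (-(if h : z ∈ T then -((f ⟨z, h⟩ : ℤ) + 1) else (g ⟨z, h⟩ : ℤ)))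
            = ∑ z ∈ T, (if bank z = i then
                (-(if h : z ∈ T then -((f ⟨z, h⟩ : ℤ) + 1) else (g ⟨z, h⟩ : ℤ))) else 0) :=
              Finset.sum_filter _ _
          _ = ∑ z : {z // z ∈ T}, (if bank z.1 = i then
                (-(if h : z.1 ∈ T then -((f ⟨z.1, h⟩ : ℤ) + 1) else (g ⟨z.1, h⟩ : ℤ))) else 0) :=
              (Finset.sum_coe_sort T _).symm
          _ = ∑ z : {z // z ∈ T}, ((if bank z.1 = i then (f z + 1 : ℕ) else 0 : ℕ) : ℤ) := by
              refine Finset.sum_congr rfl (fun z _ => ?_)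
              rw [dif_pos z.2, Subtype.coe_eta, neg_neg]
              split_ifs <;> push_cast <;> ring
          _ = ((∑ z : {z // z ∈ T}, (if bank z.1 = i then (f z + 1 : ℕ) else 0) : ℕ) : ℤ) := by
              push_cast
              rfl
          _ = (a i : ℤ) := by exact_mod_cast hf i
      refine ⟨?_, hneg, hfib⟩
      -- total sum
      have hTsum : ∑ z ∈ T, (if h : z ∈ T then -((f ⟨z, h⟩ : ℤ) + 1) else (g ⟨z, h⟩ : ℤ)) = -A := by
        have h1 : ∑ z ∈ T, (-(if h : z ∈ T then -((f ⟨z, h⟩ : ℤ) + 1) else (g ⟨z, h⟩ : ℤ))) = A := by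
          rw [← Finset.sum_fiberwise_of_maps_to (fun z _ => mem_univ (bank z))
            (fun z => -(if h : z ∈ T then -((f ⟨z, h⟩ : ℤ) + 1) else (g ⟨z, h⟩ : ℤ))), hA]
          exact Finset.sum_congr rfl (fun i _ => hfib i)
        rw [Finset.sum_neg_distrib] at h1
        omega
      have hCsum : ∑ z ∈ univ \ T,
          (if h : z ∈ T then -((f ⟨z, h⟩ : ℤ) + 1) else (g ⟨z, h⟩ : ℤ)) = (m : ℤ) + A := by
        calc ∑ z ∈ univ \ T, (if h : z ∈ T then -((f ⟨z, h⟩ : ℤ) + 1) else (g ⟨z, h⟩ : ℤ))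
            = ∑ z ∈ univ.filter (fun z => z ∉ T),
                (if h : z ∈ T then -((f ⟨z, h⟩ : ℤ) + 1) else (g ⟨z, h⟩ : ℤ)) := by
              rw [Finset.filter_not, Finset.filter_univ_mem]
          _ = ∑ z : {z : W // z ∉ T},
                (if h : z.1 ∈ T then -((f ⟨z.1, h⟩ : ℤ) + 1) else (g ⟨z.1, h⟩ : ℤ)) :=
              (sum_subtype_pred _ _).symm
          _ = ∑ z : {z : W // z ∉ T}, ((g z : ℕ) : ℤ) := by
              refine Finset.sum_congr rfl (fun z _ => ?_)
              rw [dif_neg z.2, Subtype.coe_eta]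
          _ = ((∑ z : {z : W // z ∉ T}, g z : ℕ) : ℤ) := by push_cast; rfl
          _ = (m : ℤ) + A := by rw [hg]; push_cast [hA]; ring
      have hsplit := Finset.sum_sdiff (f := fun z =>
        (if h : z ∈ T then -((f ⟨z, h⟩ : ℤ) + 1) else (g ⟨z, h⟩ : ℤ))) (subset_univ T)
      rw [hTsum, hCsum] at hsplit
      beta_reduce at hsplit ⊢
      omega
    · -- left inverse
      rintro ⟨ξ, hsum, hneg, hfib⟩
      refine Subtype.ext (funext fun z => ?_)
      simp only
      by_cases h : z ∈ T
      · rw [dif_pos h]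
        have hz : ξ z < 0 := by rw [← hneg, negs, mem_filter] at h; exact h.2
        omega
      · rw [dif_neg h]
        have hz : ¬ (ξ z < 0) := by
          intro hc
          exact h (by rw [← hneg, negs, mem_filter]; exact ⟨mem_univ z, hc⟩)
        omega
    · -- right inverse
      rintro ⟨⟨f, hf⟩, ⟨g, hg⟩⟩
      refine Prod.ext ?_ ?_ <;> refine Subtype.ext (funext fun z => ?_) <;> simp only
      · rw [dif_pos z.2, Subtype.coe_eta]
        omega
      · rw [dif_neg z.2, Subtype.coe_eta]
        omega
  -- compute the cardinalities of the two factors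
  rw [Nat.card_congr key, Nat.card_prod]
  congr 1
  · -- F
    have eF : F ≃ {f : {z // z ∈ T} → ℕ //
        ∀ i, ∑ z : {w : {z // z ∈ T} // bank w.1 = i}, (f z.1 + 1) = a i} := by
      refine Equiv.subtypeEquivRight (fun f => forall_congr' (fun i => ?_))
      have : ∑ z : {w : {z // z ∈ T} // bank w.1 = i}, (f z.1 + 1)
          = ∑ z : {z // z ∈ T}, (if bank z.1 = i then f z + 1 else 0) :=
        (sum_subtype_pred (fun w : {z // z ∈ T} => bank w.1 = i) (fun w => f w + 1)).trans
          (Finset.sum_filter _ _)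
      rw [this]
    rw [Nat.card_congr eF,
      fiberwise_card (fun z : {z // z ∈ T} => bank z.1)
        (fun i h => ∑ z, (h z + 1) = a i)]
    refine Finset.prod_congr rfl (fun i _ => ?_)
    rw [card_comp_eq, fibcard]
  · -- G
    rw [card_sum_eq]
    congr 1
    rw [Fintype.card_subtype_compl, Fintype.card_coe]

end

theorem core_count {W : Type*} [Fintype W] [DecidableEq W] {K : ℕ} (bank : W → Fin K)
    (R : Fin K → ℕ) (m : ℕ) (hW : Nonempty W) (n : Fin K → ℕ)
    (hn : ∀ i, n i = (univ.filter fun z => bank z = i).card) :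
    Nat.card {ξ : W → ℤ // admissible bank R m ξ} = Lambda n R (m : ℤ) := by
  classical
  set RR : ℤ := ∑ i, (R i : ℤ) with hRR
  -- boundedness
  have hmin : ∀ (ξ : W → ℤ) (z : W), admissible bank R m ξ →
      bankDebt bank ξ (bank z) ≤ min (ξ z) 0 := by
    intro ξ z _
    have hz : z ∈ univ.filter (fun w => bank w = bank z) := by simp
    rw [bankDebt, ← Finset.add_sum_erase _ _ hz]
    have h2 : ∑ w ∈ (univ.filter fun w => bank w = bank z).erase z, min (ξ w) 0 ≤ 0 :=
      Finset.sum_nonpos (fun w _ => min_le_right _ _)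
    omega
  have hglobal : ∀ ξ : W → ℤ, (∑ z : W, min (ξ z) 0) = ∑ i, bankDebt bank ξ i :=
    fun ξ => (Finset.sum_fiberwise univ bank (fun z => min (ξ z) 0)).symm
  have hdebts : ∀ ξ : W → ℤ, admissible bank R m ξ → -RR ≤ ∑ i, bankDebt bank ξ i := by
    intro ξ hξ
    rw [hRR, ← Finset.sum_neg_distrib]
    exact Finset.sum_le_sum (fun i _ => hξ.2 i)
  set Ω : Finset (W → ℤ) :=
    Fintype.piFinset (fun z : W => Finset.Icc (-(R (bank z) : ℤ)) ((m : ℤ) + RR)) with hΩdef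
  have hΩ : ∀ ξ : W → ℤ, admissible bank R m ξ → ξ ∈ Ω := by
    intro ξ hξ
    rw [hΩdef, Fintype.mem_piFinset]
    intro z
    rw [Finset.mem_Icc]
    constructor
    · have := hmin ξ z hξ
      have := hξ.2 (bank z)
      have : min (ξ z) 0 ≤ ξ z := min_le_left _ _
      omega
    · have h3 : ∑ w : W, ξ w = ξ z + ∑ w ∈ univ.erase z, ξ w :=
        (Finset.add_sum_erase _ _ (mem_univ z)).symm
      have h2 : ∑ w : W, min (ξ w) 0 = min (ξ z) 0 + ∑ w ∈ univ.erase z, min (ξ w) 0 :=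
        (Finset.add_sum_erase _ _ (mem_univ z)).symm
      have h1 : ∑ w ∈ univ.erase z, min (ξ w) 0 ≤ ∑ w ∈ univ.erase z, ξ w :=
        Finset.sum_le_sum (fun w _ => min_le_left _ _)
      have h4 := hdebts ξ hξ
      have h5 := hglobal ξ
      have h6 : min (ξ z) 0 ≤ 0 := min_le_right _ _
      have h7 := hξ.1
      omega
  -- admissibility from `Qp`
  have hQadm : ∀ (T : Finset W) (a : Fin K → ℕ), (∀ i, a i ≤ R i) →
      ∀ ξ : W → ℤ, Qp bank T a m ξ → admissible bank R m ξ := by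
    rintro T a ha ξ ⟨hsum, hneg, hfib⟩
    refine ⟨hsum, fun i => ?_⟩
    have h1 : bankDebt bank ξ i = ∑ z ∈ T.filter (fun z => bank z = i), ξ z := by
      rw [debt_eq, hneg]
    have h2 := hfib i
    rw [Finset.sum_neg_distrib] at h2
    have := ha i
    omega
  -- convert to a finset count
  rw [natCard_eq_filter_card Ω (admissible bank R m) hΩ]
  -- fiberwise decomposition over (negative set, debt vector)
  set dd : (W → ℤ) → Finset W × (Fin K → ℕ) := fun ξ =>
    (negs ξ, fun i => (∑ z ∈ (negs ξ).filter (fun z => bank z = i), (-ξ z)).toNat) with hdd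
  set TA : Finset (Finset W × (Fin K → ℕ)) :=
    (univ : Finset W).powerset ×ˢ Fintype.piFinset (fun i => Finset.range (R i + 1)) with hTA
  have hmaps : ∀ ξ ∈ Ω.filter (admissible bank R m), dd ξ ∈ TA := by
    intro ξ hξ
    rw [mem_filter] at hξ
    obtain ⟨-, hξ⟩ := hξ
    rw [hTA, Finset.mem_product]
    refine ⟨mem_powerset.mpr (subset_univ _), ?_⟩
    rw [Fintype.mem_piFinset]
    intro i
    rw [Finset.mem_range, Nat.lt_succ_iff]
    have h1 := hξ.2 i
    rw [debt_eq bank ξ i] at h1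
    have h2 : ∑ z ∈ (negs ξ).filter (fun z => bank z = i), (-ξ z)
        = -∑ z ∈ (negs ξ).filter (fun z => bank z = i), ξ z := Finset.sum_neg_distrib _
    rw [Int.toNat_le]
    omega
  rw [Finset.card_eq_sum_card_fiberwise hmaps]
  -- identify each fiber count
  have hfibcount : ∀ p ∈ TA, ((Ω.filter (admissible bank R m)).filter (fun ξ => dd ξ = p)).card
      = (∏ i, ccat (p.2 i) ((p.1.filter fun z => bank z = i).card))
          * sbar (Fintype.card W - p.1.card) (m + ∑ i, p.2 i) := by
    rintro ⟨T, a⟩ hp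
    rw [hTA, Finset.mem_product, Fintype.mem_piFinset] at hp
    have ha : ∀ i, a i ≤ R i := by
      intro i
      have := hp.2 i
      rw [Finset.mem_range, Nat.lt_succ_iff] at this
      exact this
    have hiff : ∀ ξ ∈ Ω, (admissible bank R m ξ ∧ dd ξ = (T, a)) ↔ Qp bank T a m ξ := by
      intro ξ _
      constructor
      · rintro ⟨hadm, hddξ⟩
        have hT : negs ξ = T := congrArg Prod.fst hddξ
        have haa : ∀ i, (∑ z ∈ (negs ξ).filter (fun z => bank z = i), (-ξ z)).toNat = a i :=
          fun i => congrFun (congrArg Prod.snd hddξ) i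
        refine ⟨hadm.1, hT, fun i => ?_⟩
        have hnn : 0 ≤ ∑ z ∈ (negs ξ).filter (fun z => bank z = i), (-ξ z) := by
          refine Finset.sum_nonneg (fun z hz => ?_)
          rw [mem_filter, negs, mem_filter] at hz
          omega
        have := haa i
        rw [← hT]
        omega
      · intro hQ
        refine ⟨hQadm T a ha ξ hQ, ?_⟩
        obtain ⟨hsum, hneg, hfib⟩ := hQ
        rw [hdd]
        refine Prod.ext ?_ ?_
        · exact hneg
        · funext i
          simp only [hneg]
          rw [hfib i]
          omega
    calc ((Ω.filter (admissible bank R m)).filter (fun ξ => dd ξ = (T, a))).card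
        = (Ω.filter (Qp bank T a m)).card := by
          rw [Finset.filter_filter]
          exact Finset.card_bij (fun ξ _ => ξ)
            (fun ξ hξ => by
              rw [mem_filter] at hξ ⊢
              exact ⟨hξ.1, (hiff ξ hξ.1).mp hξ.2⟩)
            (fun ξ hξ ξ' hξ' h => h)
            (fun ξ hξ => by
              rw [mem_filter] at hξ
              exact ⟨ξ, by rw [mem_filter]; exact ⟨hξ.1, (hiff ξ hξ.1).mpr hξ.2⟩, rfl⟩)
      _ = Nat.card {ξ : W → ℤ // Qp bank T a m ξ} :=
          (natCard_eq_filter_card Ω (Qp bank T a m)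
            (fun ξ hξ => hΩ ξ (hQadm T a ha ξ hξ))).symm
      _ = _ := inner_card bank T a m
  rw [Finset.sum_congr rfl hfibcount, hTA, Finset.sum_product]
  -- now group the subsets by their fiber cardinalities
  have hTcard : ∀ T : Finset W, T.card = ∑ i, (T.filter fun z => bank z = i).card :=
    fun T => Finset.card_eq_sum_card_fiberwise (fun z _ => mem_univ (bank z))
  set bb : Finset W → (Fin K → ℕ) := fun T i => (T.filter fun z => bank z = i).card with hbb
  have hbmaps : ∀ T ∈ (univ : Finset W).powerset,
      bb T ∈ Fintype.piFinset (fun i => Finset.range (n i + 1)) := by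
    intro T _
    rw [Fintype.mem_piFinset]
    intro i
    rw [Finset.mem_range, Nat.lt_succ_iff, hn i]
    exact Finset.card_le_card (Finset.filter_subset_filter _ (subset_univ T))
  set g : (Fin K → ℕ) → ℕ := fun b =>
    ∑ a ∈ Fintype.piFinset (fun i => Finset.range (R i + 1)),
      (∏ i, ccat (a i) (b i)) * sbar (Fintype.card W - ∑ i, b i) (m + ∑ i, a i) with hg
  have hstep : ∀ T ∈ (univ : Finset W).powerset,
      (∑ a ∈ Fintype.piFinset (fun i => Finset.range (R i + 1)),
        (∏ i, ccat (a i) ((T.filter fun z => bank z = i).card))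
          * sbar (Fintype.card W - T.card) (m + ∑ i, a i)) = g (bb T) := by
    intro T _
    rw [hg]
    refine Finset.sum_congr rfl (fun a _ => ?_)
    rw [hTcard T]
  rw [Finset.sum_congr rfl hstep,
    ← Finset.sum_fiberwise_of_maps_to hbmaps (fun T => g (bb T))]
  have hconst : ∀ b ∈ Fintype.piFinset (fun i => Finset.range (n i + 1)),
      (∑ T ∈ (univ : Finset W).powerset.filter (fun T => bb T = b), g (bb T))
        = (∏ i, (n i).choose (b i)) * g b := by
    intro b _
    rw [Finset.sum_congr rfl (fun T hT => by rw [(mem_filter.mp hT).2]),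
      Finset.sum_const, smul_eq_mul]
    congr 1
    have hrhs : ∏ i, (n i).choose (b i)
        = ∏ i, ((univ.filter fun z => bank z = i).card).choose (b i) :=
      Finset.prod_congr rfl (fun i _ => by rw [hn i])
    rw [hrhs, ← card_subsets_eq bank b]
  rw [Finset.sum_congr rfl hconst]
  -- finally identify with Lambda
  rw [Lambda, Finset.sum_comm]
  have hNW : ∑ i, n i = Fintype.card W := by
    rw [Finset.sum_congr rfl (fun i _ => hn i)]
    exact (Finset.card_eq_sum_card_fiberwise (fun z (_ : z ∈ univ) => mem_univ (bank z))).symm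
  have hWpos : 1 ≤ Fintype.card W := Fintype.card_pos_iff.mpr hW
  refine Finset.sum_congr rfl (fun b hb => ?_)
  rw [hg, Finset.mul_sum]
  refine Finset.sum_congr rfl (fun a ha => ?_)
  rw [Fintype.mem_piFinset] at hb
  have hble : ∀ i, b i ≤ n i := by
    intro i
    have := hb i
    rw [Finset.mem_range, Nat.lt_succ_iff] at this
    exact this
  have hbsum : ∑ i, b i ≤ ∑ i, n i := Finset.sum_le_sum (fun i _ => hble i)
  have hprods : ∏ i, (n i).choose (b i) * ccat (a i) (b i)
      = (∏ i, (n i).choose (b i)) * ∏ i, ccat (a i) (b i) := Finset.prod_mul_distrib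
  rw [hprods, mul_assoc]
  congr 1
  -- pointwise identification of sbar with chooseZ
  have hcastn : (∑ i, ((n i : ℤ))) = ((∑ i, n i : ℕ) : ℤ) := by push_cast; rfl
  have hcastb : (∑ i, ((b i : ℤ))) = ((∑ i, b i : ℕ) : ℤ) := by push_cast; rfl
  have hcasta : (∑ i, ((a i : ℤ))) = ((∑ i, a i : ℕ) : ℤ) := by push_cast; rfl
  rcases lt_or_eq_of_le hbsum with hlt | heq
  · -- nonempty complement
    have hk : 1 ≤ Fintype.card W - ∑ i, b i := by omega
    have hcond : (0 : ℤ) ≤ (∑ i, (n i : ℤ)) - (∑ i, (b i : ℤ)) - 1 ∧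
        (∑ i, (n i : ℤ)) - (∑ i, (b i : ℤ)) - 1
          ≤ (m : ℤ) + (∑ i, (a i : ℤ)) + (∑ i, (n i : ℤ)) - (∑ i, (b i : ℤ)) - 1 := by
      rw [hcastn, hcastb, hcasta]
      omega
    have h1 : ((m : ℤ) + (∑ i, (a i : ℤ)) + (∑ i, (n i : ℤ)) - (∑ i, (b i : ℤ)) - 1).toNat
        = m + ∑ i, a i + (Fintype.card W - ∑ i, b i) - 1 := by
      rw [hcastn, hcastb, hcasta]
      omega
    have h2 : ((∑ i, (n i : ℤ)) - (∑ i, (b i : ℤ)) - 1).toNat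
        = Fintype.card W - ∑ i, b i - 1 := by
      rw [hcastn, hcastb]
      omega
    congr 1
    rw [sbar, if_neg (by omega), chooseZ, if_pos hcond, h1, h2]
  · -- all vertices in debt: both sides vanish
    have hk0 : Fintype.card W - ∑ i, b i = 0 := by omega
    rw [chooseZ, if_neg (by rw [hcastn, hcastb, hcasta]; omega), sbar, if_pos hk0, mul_zero]
    rcases eq_or_ne (m + ∑ i, a i) 0 with hz | hz
    · rw [if_pos hz, mul_one]
      -- then a = 0 and some b i = n i ≥ 1, so the ccat product vanishes
      have hbn : ∀ i, b i = n i := by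
        intro i
        by_contra hne
        have : b i < n i := lt_of_le_of_ne (hble i) hne
        have : ∑ i, b i < ∑ i, n i :=
          Finset.sum_lt_sum (fun j _ => hble j) ⟨i, mem_univ i, this⟩
        omega
      obtain ⟨i0, hi0⟩ : ∃ i0, 1 ≤ n i0 := by
        by_contra hc
        push_neg at hc
        have : ∑ i, n i = 0 := Finset.sum_eq_zero (fun i _ => by have := hc i; omega)
        omega
      have hai0 : a i0 = 0 := by
        have : ∑ i, a i = 0 := by omega
        have := Finset.sum_eq_zero_iff.mp this i0 (mem_univ i0)
        exact this
      have : ccat (a i0) (b i0) = 0 := by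
        rw [hai0, hbn i0, ccat, if_neg (by omega), if_pos (Or.inl rfl)]
      rw [Finset.prod_eq_zero (mem_univ i0) this]
    · rw [if_neg hz, mul_zero]

theorem distribution_nonnegative {V : Type*} [Fintype V] [DecidableEq V] {K : ℕ}
    (hK : 1 ≤ K)
    (G : SimpleGraph V) (hG : G.Connected) (hN : 2 ≤ Fintype.card V)
    (bank : V → Fin K) (R : Fin K → ℕ) (M : ℕ)
    (n : Fin K → ℕ) (hn : ∀ i, n i = (Finset.univ.filter fun z => bank z = i).card)
    (j : Fin K) (x : V) (hx : bank x = j)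
    (c : ℤ) (hc0 : 0 ≤ c) (hcM : c ≤ (M : ℤ)) :
    Nat.card {ξ : V → ℤ // admissible bank R M ξ ∧ ξ x = c}
        = Lambda (Function.update n j (n j - 1)) R ((M : ℤ) - c) ∧
      (Nat.card {ξ : V → ℤ // admissible bank R M ξ ∧ ξ x = c} : ℝ)
          / (Nat.card {ξ : V → ℤ // admissible bank R M ξ} : ℝ)
        = (Lambda (Function.update n j (n j - 1)) R ((M : ℤ) - c) : ℝ)
          / (Lambda n R (M : ℤ) : ℝ) := by
  classical
  have hall : Nat.card {ξ : V → ℤ // admissible bank R M ξ} = Lambda n R (M : ℤ) :=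
    core_count bank R M ⟨x⟩ n hn
  set W := {z : V // z ≠ x} with hW
  set bank' : W → Fin K := fun z => bank z.1 with hbank'
  set m' : ℕ := ((M : ℤ) - c).toNat with hm'def
  have hm' : (m' : ℤ) = (M : ℤ) - c := Int.toNat_of_nonneg (by omega)
  set n' : Fin K → ℕ := Function.update n j (n j - 1) with hn'def
  have hNe : Nonempty W := by
    obtain ⟨z, hz⟩ := Fintype.exists_ne_of_one_lt_card hN x
    exact ⟨⟨z, hz⟩⟩
  have hfib_erase : ∀ i, (univ.filter fun z : V => z ≠ x ∧ bank z = i)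
      = (univ.filter fun z : V => bank z = i).erase x := by
    intro i
    ext z
    simp only [mem_filter, mem_erase, mem_univ, true_and]
  have hn' : ∀ i, n' i = (univ.filter fun z : W => bank' z = i).card := by
    intro i
    have h1 : (univ.filter fun z : W => bank' z = i).card
        = Fintype.card {z : W // bank' z = i} := (Fintype.card_subtype _).symm
    have h2 : Fintype.card {z : W // bank' z = i}
        = Fintype.card {z : V // z ≠ x ∧ bank z = i} :=
      Fintype.card_congr (Equiv.subtypeSubtypeEquivSubtypeInter (· ≠ x) (bank · = i))
    have h3 : Fintype.card {z : V // z ≠ x ∧ bank z = i}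
        = (univ.filter fun z : V => z ≠ x ∧ bank z = i).card := Fintype.card_subtype _
    rw [h1, h2, h3, hfib_erase i]
    rcases eq_or_ne i j with rfl | hij
    · rw [Finset.card_erase_of_mem (by simp [hx]), hn'def, Function.update_self, hn i]
    · rw [Finset.erase_eq_of_notMem (by simp [hx, hij.symm]), hn'def,
        Function.update_of_ne hij (n j - 1) n, hn i]
  -- transfer of sums and debts between V and W
  have hsum : ∀ ξ : V → ℤ, ∑ z : W, ξ z.1 = (∑ z : V, ξ z) - ξ x := by
    intro ξ
    rw [sum_subtype_pred (fun z : V => z ≠ x) ξ, Finset.filter_ne']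
    have := Finset.add_sum_erase univ ξ (mem_univ x)
    omega
  have hdebt : ∀ ξ : V → ℤ, ξ x = c →
      ∀ i, bankDebt bank' (fun z : W => ξ z.1) i = bankDebt bank ξ i := by
    intro ξ hxc i
    calc bankDebt bank' (fun z : W => ξ z.1) i
        = ∑ z : {w : W // bank' w = i}, min (ξ z.1.1) 0 :=
          (sum_subtype_pred (fun w : W => bank' w = i) (fun w : W => min (ξ w.1) 0)).symm
      _ = ∑ z : {z : V // z ≠ x ∧ bank z = i}, min (ξ z.1) 0 :=
          Fintype.sum_equiv (Equiv.subtypeSubtypeEquivSubtypeInter (· ≠ x) (bank · = i))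
            _ _ (fun w => rfl)
      _ = ∑ z ∈ univ.filter (fun z : V => z ≠ x ∧ bank z = i), min (ξ z) 0 :=
          sum_subtype_pred (fun z : V => z ≠ x ∧ bank z = i) (fun z => min (ξ z) 0)
      _ = ∑ z ∈ (univ.filter fun z : V => bank z = i).erase x, min (ξ z) 0 := by
          rw [hfib_erase i]
      _ = bankDebt bank ξ i :=
          Finset.sum_erase _ (by rw [hxc]; omega)
  have e : {ξ : V → ℤ // admissible bank R M ξ ∧ ξ x = c}
      ≃ {η : W → ℤ // admissible bank' R m' η} := by
    refine
      { toFun := fun ξ => ⟨fun z => ξ.1 z.1, ?_, ?_⟩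
        invFun := fun η => ⟨fun z => if h : z = x then c else η.1 ⟨z, h⟩, ?_, ?_⟩
        left_inv := ?_
        right_inv := ?_ }
    · rw [hsum ξ.1, ξ.2.1.1, ξ.2.2, hm']
    · intro i
      rw [hdebt ξ.1 ξ.2.2 i]
      exact ξ.2.1.2 i
    · -- invFun is admissible at level V, plus the value constraint
      obtain ⟨η, hη1, hη2⟩ := η
      set ξ0 : V → ℤ := fun z => if h : z = x then c else η ⟨z, h⟩ with hξ0
      have hres : (fun z : W => ξ0 z.1) = η := by
        funext z
        show (if h : (z : V) = x then c else η ⟨z, h⟩) = η z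
        rw [dif_neg z.2, Subtype.coe_eta]
      have hx0 : ξ0 x = c := by
        show (if h : x = x then c else η ⟨x, h⟩) = c
        exact dif_pos rfl
      refine ⟨?_, fun i => ?_⟩
      · have h1 := hsum ξ0
        rw [hres, hη1, hm'] at h1
        omega
      · have h2 := hdebt ξ0 hx0 i
        rw [hres] at h2
        rw [← h2]
        exact hη2 i
    · show (if h : x = x then c else η.1 ⟨x, h⟩) = c
      exact dif_pos rfl
    · rintro ⟨ξ, hξ, hc⟩
      refine Subtype.ext (funext fun z => ?_)
      show (if h : z = x then c else ξ z) = ξ z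
      by_cases h : z = x
      · rw [dif_pos h, h, hc]
      · rw [dif_neg h]
    · rintro ⟨η, hη⟩
      refine Subtype.ext (funext fun z => ?_)
      show (if h : (z : V) = x then c else η ⟨z, h⟩) = η z
      rw [dif_neg z.2, Subtype.coe_eta]
  have h1 : Nat.card {ξ : V → ℤ // admissible bank R M ξ ∧ ξ x = c}
      = Lambda n' R ((M : ℤ) - c) := by
    rw [Nat.card_congr e, core_count bank' R m' hNe n' hn', hm']
  exact ⟨h1, by rw [h1, hall]⟩
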